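/- Suppose G' and H' are nonempty subgraphs of G and H respectively. Then G' □ H' is an isometric subgraph of G □ H if and only if G' is an isometric subgraph of G and H' is an isometric subgraph of H. -/

import Mathlib

open SimpleGraph

variable {α β : Type*}

/-- The lexicographic product `G[H]`. -/
def lexProd (G : SimpleGraph α) (H : SimpleGraph β) : SimpleGraph (α × β) where
  Adj p q := G.Adj p.1 q.1 ∨ (p.1 = q.1 ∧ H.Adj p.2 q.2)
  symm := by
    refine ⟨?_⟩
    rintro ⟨u, x⟩ ⟨v, y⟩ (h | ⟨h1, h2⟩)
    · exact Or.inl h.symm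
    · exact Or.inr ⟨h1.symm, h2.symm⟩
  loopless := by
    refine ⟨?_⟩
    rintro ⟨u, x⟩ (h | ⟨-, h⟩)
    · exact G.irrefl h
    · exact H.irrefl h

/-- The induced subgraph on `S` is an isometric subgraph of `G`. -/
def IsometricSet (G : SimpleGraph α) (S : Set α) : Prop :=
  ∀ a b : S, (G.induce S).edist a b = G.edist a.1 b.1

/-- The set of orders of isometric (induced) subgraphs of `G`. -/
def dpSet (G : SimpleGraph α) : Set ℕ :=
  {k | ∃ S : Finset α, S.card = k ∧ IsometricSet G ↑S}

/-- `G` is distance preserving. -/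
def IsDP [Fintype α] (G : SimpleGraph α) : Prop :=
  G.Connected ∧ ∀ i : ℕ, 1 ≤ i → i ≤ Fintype.card α → i ∈ dpSet G

/-- `l` is an sdp sequence for `G`. -/
def IsSdpList [Fintype α] (G : SimpleGraph α) (l : List α) : Prop :=
  l.Nodup ∧ (∀ v : α, v ∈ l) ∧
    ∀ s : ℕ, IsometricSet G {v : α | v ∉ l.take s}

/-- `G` is sequentially distance preserving. -/
def IsSDP [Fintype α] (G : SimpleGraph α) : Prop :=
  G.Connected ∧ ∃ l : List α, IsSdpList G l


lemma edist_map_le {G : SimpleGraph α} {G' : SimpleGraph β} (φ : G ≃g G') (a b : α) :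
    G'.edist (φ a) (φ b) ≤ G.edist a b := by
  rw [edist_eq_sInf (G := G)]
  apply le_sInf
  rintro _ ⟨w, rfl⟩
  simpa [SimpleGraph.Walk.length_map] using edist_le (w.map φ.toHom)

lemma edist_iso {G : SimpleGraph α} {G' : SimpleGraph β} (φ : G ≃g G') (a b : α) :
    G'.edist (φ a) (φ b) = G.edist a b := by
  refine le_antisymm (edist_map_le φ a b) ?_
  have := edist_map_le φ.symm (φ a) (φ b)
  simpa using this

lemma walk_lower {G : SimpleGraph α} {H : SimpleGraph β} {p q : α × β}
    (w : (G □ H).Walk p q) :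
    G.edist p.1 q.1 + H.edist p.2 q.2 ≤ w.length := by
  induction w with
  | nil => simp
  | @cons u v x h w ih =>
    obtain ⟨h1, h2⟩ | ⟨h1, h2⟩ := h
    · calc G.edist u.1 x.1 + H.edist u.2 x.2
          ≤ (1 + G.edist v.1 x.1) + H.edist v.2 x.2 := by
            gcongr
            · exact le_trans (G.edist_triangle (v := v.1)) (by
                rw [edist_eq_one_iff_adj.mpr h1])
            · rw [h2]
      _ ≤ 1 + w.length := by rw [add_assoc]; exact add_le_add le_rfl ih
      _ = ((w.cons (Or.inl ⟨h1, h2⟩ : (G □ H).Adj u v)).length : ℕ∞) := by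
            exact (add_comm _ _).trans (Nat.cast_succ w.length).symm
    · calc G.edist u.1 x.1 + H.edist u.2 x.2
          ≤ G.edist v.1 x.1 + (1 + H.edist v.2 x.2) := by
            gcongr
            · rw [h2]
            · exact le_trans (H.edist_triangle (v := v.2)) (by
                rw [edist_eq_one_iff_adj.mpr h1])
      _ ≤ G.edist v.1 x.1 + H.edist v.2 x.2 + 1 := by rw [add_comm 1, ← add_assoc]
      _ ≤ w.length + 1 := by gcongr
      _ = ((w.cons (Or.inr ⟨h1, h2⟩ : (G □ H).Adj u v)).length : ℕ∞) := by
            exact (Nat.cast_succ w.length).symm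

lemma boxProd_edist (G : SimpleGraph α) (H : SimpleGraph β) (p q : α × β) :
    (G □ H).edist p q = G.edist p.1 q.1 + H.edist p.2 q.2 := by
  refine le_antisymm ?_ ?_
  · rcases eq_or_ne (G.edist p.1 q.1) ⊤ with h1 | h1
    · simp [h1]
    rcases eq_or_ne (H.edist p.2 q.2) ⊤ with h2 | h2
    · simp [h2]
    obtain ⟨w1, hw1⟩ := exists_walk_of_edist_ne_top h1
    obtain ⟨w2, hw2⟩ := exists_walk_of_edist_ne_top h2
    have := edist_le (((w1.boxProdLeft H p.2).append (w2.boxProdRight G q.1)) : (G □ H).Walk (p.1, p.2) (q.1, q.2))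
    simp only [SimpleGraph.Walk.length_append, SimpleGraph.Walk.boxProdLeft,
      SimpleGraph.Walk.boxProdRight, SimpleGraph.Walk.length_map] at this
    calc (G □ H).edist p q ≤ (w1.length + w2.length : ℕ) := this.trans
          (le_of_eq ((congrArg (Nat.cast : ℕ → ℕ∞) ((SimpleGraph.Walk.length_append _ _).trans
            (congrArg₂ (· + ·) (SimpleGraph.Walk.length_map _ _)
              (SimpleGraph.Walk.length_map _ _))))))
      _ = G.edist p.1 q.1 + H.edist p.2 q.2 := by push_cast; rw [hw1, hw2]
  · rw [edist_eq_sInf]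
    apply le_sInf
    rintro _ ⟨w, rfl⟩
    exact walk_lower w

def induceProdIso (G : SimpleGraph α) (H : SimpleGraph β) (A : Set α) (B : Set β) :
    ((G □ H).induce (A ×ˢ B)) ≃g ((G.induce A) □ (H.induce B)) where
  toEquiv := Equiv.Set.prod A B
  map_rel_iff' := by
    rintro ⟨⟨a, x⟩, ha⟩ ⟨⟨b, y⟩, hb⟩
    simp only [Equiv.Set.prod, Equiv.subtypeProdEquivProd, Equiv.coe_fn_mk, boxProd_adj,
      comap_adj, Function.Embedding.coe_subtype, Subtype.ext_iff, Prod.ext_iff]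
    tauto

lemma key_lem (G : SimpleGraph α) (H : SimpleGraph β) (A : Set α) (B : Set β)
    (a b : ↥(A ×ˢ B)) :
    ((G □ H).induce (A ×ˢ B)).edist a b
      = (G.induce A).edist ⟨a.1.1, a.2.1⟩ ⟨b.1.1, b.2.1⟩
        + (H.induce B).edist ⟨a.1.2, a.2.2⟩ ⟨b.1.2, b.2.2⟩ := by
  rw [← edist_iso (induceProdIso G H A B) a b, boxProd_edist]
  rfl

theorem stmt_8 (G : SimpleGraph α) (H : SimpleGraph β)
    (A : Set α) (B : Set β) (hA : A.Nonempty) (hB : B.Nonempty) :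
    IsometricSet (G □ H) (A ×ˢ B) ↔ IsometricSet G A ∧ IsometricSet H B := by
  constructor
  · intro h
    obtain ⟨y0, hy0⟩ := hB
    obtain ⟨x0, hx0⟩ := hA
    constructor
    · intro a b
      have := h ⟨(a.1, y0), ⟨a.2, hy0⟩⟩ ⟨(b.1, y0), ⟨b.2, hy0⟩⟩
      rw [key_lem] at this
      simpa [boxProd_edist, edist_self] using this
    · intro a b
      have := h ⟨(x0, a.1), ⟨hx0, a.2⟩⟩ ⟨(x0, b.1), ⟨hx0, b.2⟩⟩
      rw [key_lem] at this
      simpa [boxProd_edist, edist_self] using this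
  · rintro ⟨hGA, hHB⟩ a b
    rw [key_lem, hGA, hHB, boxProd_edist]
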